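/- Let (X,S) be a non-degenerate involutive set-theoretical solution with S(x,y) = (g_x(y), f_y(x)). Define T: X → X by T(x) = f_x^{-1}(x). Then T is invertible with inverse T^{-1}(y) = g_y^{-1}(y). -/

import Mathlib

/-- For a non-degenerate involutive set-theoretical solution
`S(x,y) = (g_x(y), f_y(x))` on a finite set `X`, the map `T(x) = f_x⁻¹(x)` is
invertible with inverse `y ↦ g_y⁻¹(y)`. Non-degeneracy is encoded by taking
`f g : X → Equiv.Perm X`. -/
theorem stmt_2 {X : Type*} [Fintype X] (g f : X → Equiv.Perm X)
    (invol : ∀ x y : X, (g (g x y) (f y x), f (f y x) (g x y)) = (x, y)) :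
    Function.Bijective (fun x : X => (f x)⁻¹ x) ∧
      Function.LeftInverse (fun y : X => (g y)⁻¹ y) (fun x : X => (f x)⁻¹ x) ∧
      Function.RightInverse (fun y : X => (g y)⁻¹ y) (fun x : X => (f x)⁻¹ x) := by
  have h1 : ∀ x y : X, g (g x y) (f y x) = x := fun x y => congrArg Prod.fst (invol x y)
  have h2 : ∀ x y : X, f (f y x) (g x y) = y := fun x y => congrArg Prod.snd (invol x y)
  have hL : Function.LeftInverse (fun y : X => (g y)⁻¹ y) (fun x : X => (f x)⁻¹ x) := by
    intro x
    simp only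
    have hfx : f x ((f x)⁻¹ x) = x := (f x).apply_symm_apply x
    have := h2 ((f x)⁻¹ x) x
    rw [hfx] at this
    -- this : f x (g ((f x)⁻¹ x) x) = x
    have hg : g ((f x)⁻¹ x) x = (f x)⁻¹ x :=
      (f x).injective (this.trans hfx.symm)
    nth_rewrite 2 [← hg]
    simp
  have hR : Function.RightInverse (fun y : X => (g y)⁻¹ y) (fun x : X => (f x)⁻¹ x) := by
    intro y
    simp only
    have hgy : g y ((g y)⁻¹ y) = y := (g y).apply_symm_apply y
    have := h1 y ((g y)⁻¹ y)
    rw [hgy] at this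
    -- this : g y (f ((g y)⁻¹ y) y) = y
    have hf : f ((g y)⁻¹ y) y = (g y)⁻¹ y :=
      (g y).injective (this.trans hgy.symm)
    nth_rewrite 2 [← hf]
    simp
  exact ⟨⟨hL.injective, hR.surjective⟩, hL, hR⟩
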